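/- arXiv:1703.00636 — 8 statements merged into one kernel-verified Lean document; each statement's English description precedes it below -/
import Mathlib

section
/- The degree-1 graded piece of the Jacobian ring of f₀ has dimension 2: the ℂ-vector space R₁ = mk(S₁) has finrank 2, with basis the images of x₁ and x₂ (this computes the Hodge number h^{2,0} = 2). -/
open MvPolynomial

noncomputable section

/-- The polynomial ring `ℂ[x₁,x₂,x₃,x₄]`. -/
abbrev S : Type := MvPolynomial (Fin 4) ℂ

/-- The weights `(1,1,2,5)`. -/
def w : Fin 4 → ℕ := ![1, 1, 2, 5]

/-- The Fermat-type polynomial `f₀ = x₁¹⁰ + x₂¹⁰ + x₃⁵ + x₄²`. -/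
def f₀ : S := X 0 ^ 10 + X 1 ^ 10 + X 2 ^ 5 + X 3 ^ 2

/-- The Jacobian ideal of `f₀`, generated by its four partial derivatives. -/
def J : Ideal S :=
  Ideal.span {pderiv 0 f₀, pderiv 1 f₀, pderiv 2 f₀, pderiv 3 f₀}

/-- The Jacobian ring `R = S ⧸ J`. -/
abbrev R : Type := S ⧸ J

/-- The quotient map `mk : S → R` as a `ℂ`-linear map. -/
def mkL : S →ₗ[ℂ] R := (Ideal.Quotient.mkₐ ℂ J).toLinearMap

/-- `S_k`, the space of weighted homogeneous polynomials of weighted degree `k`. -/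
def Sk (k : ℕ) : Submodule ℂ S := weightedHomogeneousSubmodule ℂ w k

/-- `R_k = mk(S_k)`, the image of `S_k` in the Jacobian ring. -/
def Rk (k : ℕ) : Submodule ℂ R := (Sk k).map mkL

open DualNumber TrivSqZeroExt

lemma J_le_ker (v : Fin 4 → DualNumber ℂ)
    (hv : ∀ i, (aeval v : S →ₐ[ℂ] DualNumber ℂ) (pderiv i f₀) = 0) :
    J ≤ RingHom.ker (aeval v : S →ₐ[ℂ] DualNumber ℂ) := by
  rw [J, Ideal.span_le]
  rintro p (rfl | rfl | rfl | rfl) <;>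
    simpa [RingHom.mem_ker] using hv _

lemma apply_mem_J {p : S} (hp : p ∈ J) (v : Fin 4 → DualNumber ℂ)
    (hv : ∀ i, (aeval v : S →ₐ[ℂ] DualNumber ℂ) (pderiv i f₀) = 0) :
    (aeval v : S →ₐ[ℂ] DualNumber ℂ) p = 0 :=
  J_le_ker v hv hp

lemma eps_pow_nine : (ε : DualNumber ℂ) ^ 9 = 0 := by
  have h : (ε : DualNumber ℂ) ^ 9 = ε * ε * ε ^ 7 := by ring
  rw [h, eps_mul_eps, zero_mul]

lemma eps_ne_zero' : (ε : DualNumber ℂ) ≠ 0 := fun h =>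
  (one_ne_zero : (1:ℂ) ≠ 0) (by simpa using congrArg TrivSqZeroExt.snd h)

lemma hv0 : ∀ i, (aeval ![ε, 0, 0, 0] : S →ₐ[ℂ] DualNumber ℂ) (pderiv i f₀) = 0 := by
  intro i; fin_cases i <;> simp [f₀, eps_pow_nine]

lemma hv1 : ∀ i, (aeval ![0, ε, 0, 0] : S →ₐ[ℂ] DualNumber ℂ) (pderiv i f₀) = 0 := by
  intro i; fin_cases i <;> simp [f₀, eps_pow_nine]

lemma Sk_one : Sk 1 = Submodule.span ℂ {(X 0 : S), X 1} := by
  apply le_antisymm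
  · intro p hp
    rw [Sk, mem_weightedHomogeneousSubmodule] at hp
    rw [p.as_sum]
    refine Submodule.sum_mem _ fun d hd => ?_
    have h1 : Finsupp.weight w d = 1 := hp (mem_support_iff.mp hd)
    have h2 : d 0 * 1 + d 1 * 1 + d 2 * 2 + d 3 * 5 = 1 := by
      rw [Finsupp.weight_apply, Finsupp.sum_fintype _ _ (by simp)] at h1
      simpa [Fin.sum_univ_four, w] using h1
    have hcase : (d = Finsupp.single 0 1) ∨ (d = Finsupp.single 1 1) := by
      rcases (by omega : (d 0 = 1 ∧ d 1 = 0 ∧ d 2 = 0 ∧ d 3 = 0) ∨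
          (d 0 = 0 ∧ d 1 = 1 ∧ d 2 = 0 ∧ d 3 = 0)) with h | h
      · left; ext i; fin_cases i <;> simp [h.1, h.2.1, h.2.2.1, h.2.2.2, Finsupp.single_apply]
      · right; ext i; fin_cases i <;> simp [h.1, h.2.1, h.2.2.1, h.2.2.2, Finsupp.single_apply]
    have hm : ∀ i : Fin 4, (monomial (Finsupp.single i 1)) (coeff d p) = coeff d p • X i := by
      intro i
      rw [X, smul_monomial, smul_eq_mul, mul_one]
    rcases hcase with rfl | rfl
    · rw [hm 0]
      exact Submodule.smul_mem _ _ (Submodule.subset_span (by simp))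
    · rw [hm 1]
      exact Submodule.smul_mem _ _ (Submodule.subset_span (by simp))
  · rw [Submodule.span_le]
    rintro p (rfl | rfl) <;>
    · rw [SetLike.mem_coe, Sk, mem_weightedHomogeneousSubmodule]
      exact isWeightedHomogeneous_X ℂ w _

/-- The degree-1 graded piece of the Jacobian ring of `f₀` has dimension 2,
with basis the images of `x₁` and `x₂` (this computes `h^{2,0} = 2`). -/
theorem finrank_R1 :
    Module.finrank ℂ (Rk 1) = 2 ∧
      LinearIndependent ℂ
        ![(Ideal.Quotient.mk J (X 0) : R), (Ideal.Quotient.mk J (X 1) : R)] ∧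
      Submodule.span ℂ
        {(Ideal.Quotient.mk J (X 0) : R), (Ideal.Quotient.mk J (X 1) : R)} = Rk 1 := by
  have hspan : Submodule.span ℂ
      {(Ideal.Quotient.mk J (X 0) : R), (Ideal.Quotient.mk J (X 1) : R)} = Rk 1 := by
    rw [Rk, Sk_one, Submodule.map_span]
    congr 1
    simp only [Set.image_insert_eq, Set.image_singleton]
    rfl
  have hli : LinearIndependent ℂ
      ![(Ideal.Quotient.mk J (X 0) : R), (Ideal.Quotient.mk J (X 1) : R)] := by
    rw [LinearIndependent.pair_iff]
    intro s t hst
    have hmem : s • (X 0 : S) + t • X 1 ∈ J := by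
      rw [← Ideal.Quotient.eq_zero_iff_mem, map_add, ← Ideal.Quotient.mkₐ_eq_mk ℂ, map_smul, map_smul]
      simpa using hst
    constructor
    · have := apply_mem_J hmem ![ε, 0, 0, 0] hv0
      simp at this
      exact this.resolve_right eps_ne_zero'
    · have := apply_mem_J hmem ![0, ε, 0, 0] hv1
      simp at this
      exact this.resolve_right eps_ne_zero'
  refine ⟨?_, hli, hspan⟩
  rw [← hspan]
  have hr : ({(Ideal.Quotient.mk J (X 0) : R), (Ideal.Quotient.mk J (X 1) : R)} : Set R) =
      Set.range ![(Ideal.Quotient.mk J (X 0) : R), (Ideal.Quotient.mk J (X 1) : R)] := by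
    ext x; simp [Matrix.range_cons, Matrix.range_empty, or_comm]
  rw [hr, finrank_span_eq_card hli]
  simp
end
end

section
/- The degree-11 graded piece of the Jacobian ring of f₀ has dimension 28: the ℂ-vector space R₁₁ = mk(S₁₁) has finrank 28 (this computes the Hodge number h^{1,1} = 28 for degree-10 hypersurfaces in P(1,1,2,5)). -/
open MvPolynomial

noncomputable section

/-! ### Auxiliary material -/

namespace JacAux

/-- The exponent finsupp of the monomial `x₀^a x₁^b x₂^c`. -/
def Dm (a b c : ℕ) : Fin 4 →₀ ℕ :=
  Finsupp.single 0 a + Finsupp.single 1 b + Finsupp.single 2 c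

lemma Dm_apply0 (a b c : ℕ) : Dm a b c 0 = a := by
  simp [Dm, Finsupp.single_apply]
lemma Dm_apply1 (a b c : ℕ) : Dm a b c 1 = b := by
  simp [Dm, Finsupp.single_apply]
lemma Dm_apply2 (a b c : ℕ) : Dm a b c 2 = c := by
  simp [Dm, Finsupp.single_apply]
lemma Dm_apply3 (a b c : ℕ) : Dm a b c 3 = 0 := by
  simp [Dm, Finsupp.single_apply]

lemma Dm_inj {a b c a' b' c' : ℕ} (h : Dm a b c = Dm a' b' c') :
    a = a' ∧ b = b' ∧ c = c' := by
  refine ⟨?_, ?_, ?_⟩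
  · have := DFunLike.congr_fun h 0; rwa [Dm_apply0, Dm_apply0] at this
  · have := DFunLike.congr_fun h 1; rwa [Dm_apply1, Dm_apply1] at this
  · have := DFunLike.congr_fun h 2; rwa [Dm_apply2, Dm_apply2] at this

lemma eq_Dm_of {d : Fin 4 →₀ ℕ} (h3 : d 3 = 0) : d = Dm (d 0) (d 1) (d 2) := by
  ext i
  fin_cases i
  · exact (Dm_apply0 _ _ _).symm
  · exact (Dm_apply1 _ _ _).symm
  · exact (Dm_apply2 _ _ _).symm
  · exact h3.trans (Dm_apply3 _ _ _).symm

lemma pd0 : pderiv (0 : Fin 4) f₀ = monomial (Finsupp.single 0 9) 10 := by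
  simp [f₀, X_pow_eq_monomial]
  ext i
  simp [Finsupp.single_apply]
  split <;> rfl

lemma pd1 : pderiv (1 : Fin 4) f₀ = monomial (Finsupp.single 1 9) 10 := by
  simp [f₀, X_pow_eq_monomial]
  ext i
  simp [Finsupp.single_apply]
  split <;> rfl

lemma pd2 : pderiv (2 : Fin 4) f₀ = monomial (Finsupp.single 2 4) 5 := by
  simp [f₀, X_pow_eq_monomial]
  ext i
  simp [Finsupp.single_apply]
  split <;> rfl

lemma pd3 : pderiv (3 : Fin 4) f₀ = monomial (Finsupp.single 3 1) 2 := by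
  simp [f₀, X_pow_eq_monomial]
  ext i
  simp [Finsupp.single_apply]
  split <;> rfl

lemma J_eq : J = Ideal.span
    {monomial (Finsupp.single 0 9) (10 : ℂ), monomial (Finsupp.single 1 9) 10,
     monomial (Finsupp.single 2 4) 5, monomial (Finsupp.single 3 1) 2} := by
  rw [J, pd0, pd1, pd2, pd3]

/-- Any element of `J` has vanishing coefficient on "good" monomials. -/
lemma coeff_eq_zero_of_mem_J {p : S} (hp : p ∈ J) {d : Fin 4 →₀ ℕ}
    (h0 : d 0 ≤ 8) (h1 : d 1 ≤ 8) (h2 : d 2 ≤ 3) (h3 : d 3 = 0) :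
    coeff d p = 0 := by
  rw [J_eq] at hp
  rw [show ({monomial (Finsupp.single 0 9) (10 : ℂ), monomial (Finsupp.single 1 9) 10,
     monomial (Finsupp.single 2 4) 5, monomial (Finsupp.single 3 1) 2} : Set S) =
     insert (monomial (Finsupp.single 0 9) (10 : ℂ))
       (insert (monomial (Finsupp.single 1 9) 10)
         (insert (monomial (Finsupp.single 2 4) 5) {monomial (Finsupp.single 3 1) 2}))
     from rfl] at hp
  obtain ⟨r0, z0, hz0, rfl⟩ := Ideal.mem_span_insert.mp hp
  obtain ⟨r1, z1, hz1, rfl⟩ := Ideal.mem_span_insert.mp hz0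
  obtain ⟨r2, z2, hz2, rfl⟩ := Ideal.mem_span_insert.mp hz1
  obtain ⟨r3, rfl⟩ := Ideal.mem_span_singleton'.mp hz2
  have e0 : ¬ (Finsupp.single (0 : Fin 4) 9 ≤ d) := by
    rw [Finsupp.single_le_iff]; omega
  have e1 : ¬ (Finsupp.single (1 : Fin 4) 9 ≤ d) := by
    rw [Finsupp.single_le_iff]; omega
  have e2 : ¬ (Finsupp.single (2 : Fin 4) 4 ≤ d) := by
    rw [Finsupp.single_le_iff]; omega
  have e3 : ¬ (Finsupp.single (3 : Fin 4) 1 ≤ d) := by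
    rw [Finsupp.single_le_iff]; omega
  simp [coeff_add, coeff_mul_monomial', e0, e1, e2, e3]

/-- Monomials divisible by a generator lie in `J`. -/
lemma monomial_mem_J {d : Fin 4 →₀ ℕ} (r : ℂ)
    (h : 9 ≤ d 0 ∨ 9 ≤ d 1 ∨ 4 ≤ d 2 ∨ 1 ≤ d 3) : (monomial d r : S) ∈ J := by
  have key : ∀ (i : Fin 4) (k : ℕ) (c : ℂ), c ≠ 0 → k ≤ d i →
      (monomial (Finsupp.single i k) c : S) ∈ J → (monomial d r : S) ∈ J := by
    intro i k c hc hk hX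
    have hle : Finsupp.single i k ≤ d := Finsupp.single_le_iff.mpr hk
    have hdd : (monomial d r : S) =
        monomial (d - Finsupp.single i k) (r * c⁻¹) * monomial (Finsupp.single i k) c := by
      rw [monomial_mul, tsub_add_cancel_of_le hle, mul_assoc, inv_mul_cancel₀ hc, mul_one]
    rw [hdd]
    exact Ideal.mul_mem_left _ _ hX
  rcases h with h | h | h | h
  · exact key 0 9 10 (by norm_num) h (by rw [J_eq]; exact Ideal.subset_span (by simp))
  · exact key 1 9 10 (by norm_num) h (by rw [J_eq]; exact Ideal.subset_span (by simp))
  · exact key 2 4 5 (by norm_num) h (by rw [J_eq]; exact Ideal.subset_span (by simp))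
  · exact key 3 1 2 (by norm_num) h (by rw [J_eq]; exact Ideal.subset_span (by simp))

lemma weight_eq (d : Fin 4 →₀ ℕ) :
    Finsupp.weight w d = d 0 + d 1 + 2 * d 2 + 5 * d 3 := by
  rw [Finsupp.weight_apply, Finsupp.sum_fintype _ _ (by intro i; simp)]
  simp [Fin.sum_univ_four, w]
  ring

lemma mono_mem_Sk {a b c : ℕ} (h : a + b + 2 * c = 11) :
    (monomial (Dm a b c) 1 : S) ∈ Sk 11 := by
  rw [Sk, mem_weightedHomogeneousSubmodule]
  apply isWeightedHomogeneous_monomial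
  rw [weight_eq, Dm_apply0, Dm_apply1, Dm_apply2, Dm_apply3]
  omega

/-- The index set of good monomial exponents. -/
def Tset : Finset (ℕ × ℕ × ℕ) :=
  (Finset.range 9 ×ˢ Finset.range 9 ×ˢ Finset.range 4).filter
    (fun t => t.1 + t.2.1 + 2 * t.2.2 = 11)

lemma card_Tset : Tset.card = 28 := by decide

lemma mem_Tset {t : ℕ × ℕ × ℕ} :
    t ∈ Tset ↔ t.1 ≤ 8 ∧ t.2.1 ≤ 8 ∧ t.2.2 ≤ 3 ∧ t.1 + t.2.1 + 2 * t.2.2 = 11 := by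
  simp only [Tset, Finset.mem_filter, Finset.mem_product, Finset.mem_range]
  omega

/-- The candidate basis of `R₁₁`. -/
def gfun (t : {t : ℕ × ℕ × ℕ // t ∈ Tset}) : R :=
  mkL (monomial (Dm t.1.1 t.1.2.1 t.1.2.2) 1)

lemma mkL_apply (p : S) : mkL p = Ideal.Quotient.mk J p := rfl

lemma mkL_eq_zero {p : S} (hp : p ∈ J) : mkL p = 0 := by
  rw [mkL_apply, Ideal.Quotient.eq_zero_iff_mem]
  exact hp

lemma Rk_eq : Rk 11 = Submodule.span ℂ (Set.range gfun) := by
  apply le_antisymm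
  · rintro x ⟨p, hp, rfl⟩
    have hp' : p.IsWeightedHomogeneous w 11 := hp
    rw [p.as_sum, map_sum]
    apply Submodule.sum_mem
    intro v hv
    have hw : Finsupp.weight w v = 11 := hp' (mem_support_iff.mp hv)
    rw [weight_eq] at hw
    by_cases hbad : 9 ≤ v 0 ∨ 9 ≤ v 1 ∨ 4 ≤ v 2 ∨ 1 ≤ v 3
    · rw [mkL_eq_zero (monomial_mem_J _ hbad)]
      exact Submodule.zero_mem _
    · push_neg at hbad
      obtain ⟨b0, b1, b2, b3⟩ := hbad
      have h3 : v 3 = 0 := by omega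
      have hT : (v 0, v 1, v 2) ∈ Tset := mem_Tset.mpr (by simp; omega)
      have hm : (monomial v (coeff v p) : S) = coeff v p • monomial v 1 := by
        rw [smul_monomial, smul_eq_mul, mul_one]
      rw [hm, map_smul]
      refine Submodule.smul_mem _ _ (Submodule.subset_span ⟨⟨(v 0, v 1, v 2), hT⟩, ?_⟩)
      rw [gfun]
      congr 1
      rw [← eq_Dm_of h3]
  · rw [Submodule.span_le]
    rintro x ⟨t, rfl⟩
    have ht := mem_Tset.mp t.2
    exact ⟨monomial (Dm t.1.1 t.1.2.1 t.1.2.2) 1, mono_mem_Sk (by omega), rfl⟩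

lemma gfun_li : LinearIndependent ℂ gfun := by
  rw [Fintype.linearIndependent_iff]
  intro v hv i0
  set q : S := ∑ i : {t : ℕ × ℕ × ℕ // t ∈ Tset},
      v i • monomial (Dm i.1.1 i.1.2.1 i.1.2.2) 1 with hq
  have hql : mkL q = 0 := by
    rw [hq, map_sum]
    simp only [map_smul]
    exact hv
  have hqJ : q ∈ J := by
    rw [mkL_apply, Ideal.Quotient.eq_zero_iff_mem] at hql
    exact hql
  have ht0 := mem_Tset.mp i0.2
  have h0 : coeff (Dm i0.1.1 i0.1.2.1 i0.1.2.2) q = 0 :=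
    coeff_eq_zero_of_mem_J hqJ
      (by rw [Dm_apply0]; omega) (by rw [Dm_apply1]; omega)
      (by rw [Dm_apply2]; omega) (Dm_apply3 _ _ _)
  have hiff : ∀ i : {t : ℕ × ℕ × ℕ // t ∈ Tset},
      (Dm i.1.1 i.1.2.1 i.1.2.2 = Dm i0.1.1 i0.1.2.1 i0.1.2.2) ↔ i = i0 := by
    intro i
    constructor
    · intro h
      obtain ⟨e1, e2, e3⟩ := Dm_inj h
      ext
      · exact e1
      · exact e2
      · exact e3
    · intro h; rw [h]
  rw [hq, coeff_sum] at h0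
  simp only [coeff_smul, coeff_monomial, hiff, smul_eq_mul, mul_ite, mul_one, mul_zero] at h0
  rwa [Finset.sum_ite_eq' Finset.univ i0 v, if_pos (Finset.mem_univ _)] at h0

end JacAux

open JacAux in
/-- The degree-11 graded piece of the Jacobian ring of `f₀` has dimension 28
(this computes the Hodge number `h^{1,1} = 28`). -/
theorem finrank_R11 : Module.finrank ℂ (Rk 11) = 28 := by
  rw [Rk_eq, finrank_span_eq_card gfun_li, Fintype.card_coe, card_Tset]
end
end

section
/- The images under mk of the following 28 monomials form a ℂ-basis of R₁₁ = mk(S₁₁): x₁ⁱx₂^{5-i}x₃³ for 0 ≤ i ≤ 5 (six monomials), x₁ⁱx₂^{7-i}x₃² for 0 ≤ i ≤ 7 (eight monomials), x₁ⁱx₂^{9-i}x₃ for 1 ≤ i ≤ 8 (eight monomials), and x₁ⁱx₂^{11-i} for 3 ≤ i ≤ 8 (six monomials). -/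
open MvPolynomial

noncomputable section

/-- The 28 monomials of weighted degree 11:
`x₁ⁱx₂^{5-i}x₃³` for `0 ≤ i ≤ 5`, `x₁ⁱx₂^{7-i}x₃²` for `0 ≤ i ≤ 7`,
`x₁ⁱx₂^{9-i}x₃` for `1 ≤ i ≤ 8`, and `x₁ⁱx₂^{11-i}` for `3 ≤ i ≤ 8`. -/
def fam11 : Fin 28 → S := fun n =>
  if (n : ℕ) < 6 then X 0 ^ (n : ℕ) * X 1 ^ (5 - (n : ℕ)) * X 2 ^ 3
  else if (n : ℕ) < 14 then X 0 ^ ((n : ℕ) - 6) * X 1 ^ (7 - ((n : ℕ) - 6)) * X 2 ^ 2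
  else if (n : ℕ) < 22 then X 0 ^ ((n : ℕ) - 13) * X 1 ^ (9 - ((n : ℕ) - 13)) * X 2
  else X 0 ^ ((n : ℕ) - 19) * X 1 ^ (11 - ((n : ℕ) - 19))

namespace Basis11Aux

def A : Fin 28 → ℕ := fun n =>
  if (n : ℕ) < 6 then (n : ℕ)
  else if (n : ℕ) < 14 then (n : ℕ) - 6
  else if (n : ℕ) < 22 then (n : ℕ) - 13
  else (n : ℕ) - 19

def B : Fin 28 → ℕ := fun n =>
  if (n : ℕ) < 6 then 5 - (n : ℕ)
  else if (n : ℕ) < 14 then 7 - ((n : ℕ) - 6)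
  else if (n : ℕ) < 22 then 9 - ((n : ℕ) - 13)
  else 11 - ((n : ℕ) - 19)

def C3 : Fin 28 → ℕ := fun n =>
  if (n : ℕ) < 6 then 3 else if (n : ℕ) < 14 then 2 else if (n : ℕ) < 22 then 1 else 0

/-- exponent vector as a function -/
def v (n : Fin 28) : Fin 4 → ℕ := ![A n, B n, C3 n, 0]

/-- exponent vector as a finsupp -/
def dd (n : Fin 28) : Fin 4 →₀ ℕ := Finsupp.equivFunOnFinite.symm (v n)

lemma dd_apply (n : Fin 28) (i : Fin 4) : dd n i = v n i := rfl

lemma key (a b c : ℕ) :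
    (X 0 ^ a * X 1 ^ b * X 2 ^ c : S) =
      monomial (Finsupp.equivFunOnFinite.symm ![a, b, c, 0]) (1 : ℂ) := by
  rw [X_pow_eq_monomial, X_pow_eq_monomial, X_pow_eq_monomial, monomial_mul, monomial_mul]
  rw [one_mul, one_mul]
  have h : (Finsupp.single (0:Fin 4) a + Finsupp.single 1 b + Finsupp.single 2 c)
      = Finsupp.equivFunOnFinite.symm ![a, b, c, 0] := by
    ext i; fin_cases i <;> simp
  rw [h]

lemma fam_eq (n : Fin 28) : fam11 n = monomial (dd n) (1 : ℂ) := by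
  unfold fam11 dd v A B C3
  split_ifs with h1 h2 h3
  · exact key _ _ _
  · exact key _ _ _
  · rw [show (X 2 : S) = X 2 ^ 1 from (pow_one _).symm]; exact key _ _ _
  · rw [show (X 0 ^ ((n:ℕ)-19) * X 1 ^ (11 - ((n:ℕ)-19)) : S)
        = X 0 ^ ((n:ℕ)-19) * X 1 ^ (11 - ((n:ℕ)-19)) * X 2 ^ 0 by ring]
    exact key _ _ _

def gset : Set (Fin 4 →₀ ℕ) :=
  {Finsupp.single 0 9, Finsupp.single 1 9, Finsupp.single 2 4, Finsupp.single 3 1}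

lemma J_eq : J = Ideal.span ((fun s => monomial s (1 : ℂ)) '' gset) := by
  have himg : ((fun s => monomial s (1 : ℂ)) '' gset)
      = {X 0 ^ 9, X 1 ^ 9, X 2 ^ 4, (X 3 : S)} := by
    simp only [gset, Set.image_insert_eq, Set.image_singleton, ← X_pow_eq_monomial, pow_one]
  have h0 : pderiv 0 f₀ = (10 : S) * X 0 ^ 9 := by simp [f₀, pderiv_pow, pderiv_X]
  have h1 : pderiv 1 f₀ = (10 : S) * X 1 ^ 9 := by simp [f₀, pderiv_pow, pderiv_X]
  have h2 : pderiv 2 f₀ = (5 : S) * X 2 ^ 4 := by simp [f₀, pderiv_pow, pderiv_X]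
  have h3 : pderiv 3 f₀ = (2 : S) * X 3 := by simp [f₀, pderiv_pow, pderiv_X]
  rw [himg]
  apply le_antisymm
  · rw [J, Ideal.span_le]
    rintro x (rfl | rfl | rfl | rfl)
    · rw [h0]; exact Ideal.mul_mem_left _ _ (Ideal.subset_span (by simp))
    · rw [h1]; exact Ideal.mul_mem_left _ _ (Ideal.subset_span (by simp))
    · rw [h2]; exact Ideal.mul_mem_left _ _ (Ideal.subset_span (by simp))
    · rw [h3]; exact Ideal.mul_mem_left _ _ (Ideal.subset_span (by simp))
  · rw [Ideal.span_le]
    rintro x (rfl | rfl | rfl | rfl)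
    · have : (X 0 ^ 9 : S) = C (10⁻¹ : ℂ) * pderiv 0 f₀ := by
        rw [h0, ← mul_assoc, ← map_ofNat (C : ℂ →+* S) 10, ← C_mul]; norm_num
      rw [this]; exact Ideal.mul_mem_left _ _ (Ideal.subset_span (by simp [J]))
    · have : (X 1 ^ 9 : S) = C (10⁻¹ : ℂ) * pderiv 1 f₀ := by
        rw [h1, ← mul_assoc, ← map_ofNat (C : ℂ →+* S) 10, ← C_mul]; norm_num
      rw [this]; exact Ideal.mul_mem_left _ _ (Ideal.subset_span (by simp [J]))
    · have : (X 2 ^ 4 : S) = C (5⁻¹ : ℂ) * pderiv 2 f₀ := by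
        rw [h2, ← mul_assoc, ← map_ofNat (C : ℂ →+* S) 5, ← C_mul]; norm_num
      rw [this]; exact Ideal.mul_mem_left _ _ (Ideal.subset_span (by simp [J]))
    · have : (X 3 : S) = C (2⁻¹ : ℂ) * pderiv 3 f₀ := by
        rw [h3, ← mul_assoc, ← map_ofNat (C : ℂ →+* S) 2, ← C_mul]; norm_num
      rw [this]; exact Ideal.mul_mem_left _ _ (Ideal.subset_span (by simp [J]))

lemma mem_J_iff (p : S) :
    p ∈ J ↔ ∀ m ∈ p.support, 9 ≤ m 0 ∨ 9 ≤ m 1 ∨ 4 ≤ m 2 ∨ 1 ≤ m 3 := by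
  rw [J_eq, mem_ideal_span_monomial_image]
  apply forall₂_congr
  intro m _
  simp [gset, Finsupp.single_le_iff]

lemma weight_eq (m : Fin 4 →₀ ℕ) :
    (Finsupp.weight w) m = m 0 + m 1 + 2 * m 2 + 5 * m 3 := by
  rw [Finsupp.weight_apply, Finsupp.sum_fintype]
  · rw [Fin.sum_univ_four]
    simp [w]
    ring
  · intro i
    exact zero_smul ℕ _

lemma bounds : ∀ n : Fin 28, A n ≤ 8 ∧ B n ≤ 8 ∧ C3 n ≤ 3 ∧ A n + B n + 2 * C3 n = 11 := by
  decide

lemma inj : ∀ i j : Fin 28, A i = A j → B i = B j → C3 i = C3 j → i = j := by decide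

lemma exists_n : ∀ (a b : Fin 9) (c : Fin 4), (a : ℕ) + (b : ℕ) + 2 * (c : ℕ) = 11 →
    ∃ n : Fin 28, A n = a ∧ B n = b ∧ C3 n = c := by decide

lemma dd0 (n : Fin 28) : dd n 0 = A n := rfl
lemma dd1 (n : Fin 28) : dd n 1 = B n := rfl
lemma dd2 (n : Fin 28) : dd n 2 = C3 n := rfl
lemma dd3 (n : Fin 28) : dd n 3 = 0 := rfl

lemma dd_inj : Function.Injective dd := by
  intro i j h
  have hv : v i = v j := Finsupp.equivFunOnFinite.symm.injective h
  exact inj i j (congrFun hv 0) (congrFun hv 1) (congrFun hv 2)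

lemma mkL_apply (p : S) : mkL p = Ideal.Quotient.mk J p := rfl

lemma fam_mem (n : Fin 28) : fam11 n ∈ Sk 11 := by
  rw [Sk, mem_weightedHomogeneousSubmodule, fam_eq]
  apply isWeightedHomogeneous_monomial
  rw [weight_eq, dd0, dd1, dd2, dd3]
  have := bounds n
  omega

end Basis11Aux

open Basis11Aux

/-- The images under `mk` of the 28 monomials of `fam11` form a `ℂ`-basis of `R₁₁`. -/
theorem basis_R11 :
    LinearIndependent ℂ (fun n : Fin 28 => (Ideal.Quotient.mk J (fam11 n) : R)) ∧
      Submodule.span ℂ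
        (Set.range fun n : Fin 28 => (Ideal.Quotient.mk J (fam11 n) : R)) = Rk 11 := by
  constructor
  · rw [Fintype.linearIndependent_iff]
    intro g hg i
    have hmem : (∑ j, monomial (dd j) (g j) : S) ∈ J := by
      rw [← Ideal.Quotient.eq_zero_iff_mem, ← Ideal.Quotient.mkₐ_eq_mk ℂ, map_sum, ← hg]
      apply Finset.sum_congr rfl
      intro j _
      rw [show (monomial (dd j)) (g j) = g j • fam11 j by
        rw [fam_eq, smul_monomial, smul_eq_mul, mul_one], map_smul,
        Ideal.Quotient.mkₐ_eq_mk]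
    by_contra hgi
    have hco : coeff (dd i) (∑ j, monomial (dd j) (g j) : S) = g i := by
      rw [coeff_sum, Finset.sum_eq_single i]
      · simp [coeff_monomial]
      · intro j _ hji
        rw [coeff_monomial, if_neg (fun h => hji (dd_inj h))]
      · simp
    have hsupp : dd i ∈ (∑ j, monomial (dd j) (g j) : S).support := by
      rw [mem_support_iff, hco]; exact hgi
    have := (mem_J_iff _).mp hmem (dd i) hsupp
    rw [dd0, dd1, dd2, dd3] at this
    have hb := bounds i
    omega
  · apply le_antisymm
    · rw [Submodule.span_le]
      rintro x ⟨n, rfl⟩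
      exact ⟨fam11 n, fam_mem n, rfl⟩
    · rintro x ⟨p, hp, rfl⟩
      have hp' : IsWeightedHomogeneous w p 11 := hp
      rw [mkL_apply]
      rw [p.as_sum, map_sum]
      apply Submodule.sum_mem
      intro m hm
      have hdeg : (Finsupp.weight w) m = 11 := hp' (mem_support_iff.mp hm)
      rw [weight_eq] at hdeg
      by_cases hc : 9 ≤ m 0 ∨ 9 ≤ m 1 ∨ 4 ≤ m 2 ∨ 1 ≤ m 3
      · have hJm : (monomial m) (coeff m p) ∈ J := by
          rw [mem_J_iff]
          intro m' hm'
          have hm'' := support_monomial_subset hm'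
          rw [Finset.mem_singleton] at hm''
          subst hm''
          exact hc
        rw [Ideal.Quotient.eq_zero_iff_mem.mpr hJm]
        exact Submodule.zero_mem _
      · push_neg at hc
        obtain ⟨h0, h1, h2, h3⟩ := hc
        obtain ⟨n, hA, hB, hC⟩ := exists_n ⟨m 0, by omega⟩ ⟨m 1, by omega⟩ ⟨m 2, by omega⟩
          (by show m 0 + m 1 + 2 * m 2 = 11; omega)
        have hA' : A n = m 0 := hA
        have hB' : B n = m 1 := hB
        have hC' : C3 n = m 2 := hC
        have hmdd : m = dd n := by
          have e0 : m 0 = dd n 0 := by rw [dd0]; exact hA'.symm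
          have e1 : m 1 = dd n 1 := by rw [dd1]; exact hB'.symm
          have e2 : m 2 = dd n 2 := by rw [dd2]; exact hC'.symm
          have e3 : m 3 = dd n 3 := by rw [dd3]; omega
          ext i
          fin_cases i
          · exact e0
          · exact e1
          · exact e2
          · exact e3
        subst hmdd
        rw [show (monomial (dd n)) (coeff (dd n) p) = coeff (dd n) p • fam11 n by
          rw [fam_eq, smul_monomial, smul_eq_mul, mul_one]]
        have : Ideal.Quotient.mk J (coeff (dd n) p • fam11 n)
            = coeff (dd n) p • Ideal.Quotient.mk J (fam11 n) := by
          rw [← Ideal.Quotient.mkₐ_eq_mk ℂ, map_smul]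
        rw [this]
        exact Submodule.smul_mem _ _ (Submodule.subset_span ⟨n, rfl⟩)
end
end

section
/- The images under mk of the following 28 monomials form a ℂ-basis of R₁₀ = mk(S₁₀): x₁ⁱx₂^{4-i}x₃³ for 0 ≤ i ≤ 4 (five monomials), x₁ⁱx₂^{6-i}x₃² for 0 ≤ i ≤ 6 (seven monomials), x₁ⁱx₂^{8-i}x₃ for 0 ≤ i ≤ 8 (nine monomials), and x₁ⁱx₂^{10-i} for 2 ≤ i ≤ 8 (seven monomials). -/
open MvPolynomial

noncomputable section

def A : Fin 28 → ℕ := fun n =>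
  if (n : ℕ) < 5 then (n : ℕ) else if (n : ℕ) < 12 then (n : ℕ) - 5
  else if (n : ℕ) < 21 then (n : ℕ) - 12 else (n : ℕ) - 19
def B : Fin 28 → ℕ := fun n =>
  if (n : ℕ) < 5 then 4 - (n : ℕ) else if (n : ℕ) < 12 then 6 - ((n : ℕ) - 5)
  else if (n : ℕ) < 21 then 8 - ((n : ℕ) - 12) else 10 - ((n : ℕ) - 19)
def Cc : Fin 28 → ℕ := fun n =>
  if (n : ℕ) < 5 then 3 else if (n : ℕ) < 12 then 2 else if (n : ℕ) < 21 then 1 else 0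
def d (n : Fin 28) : Fin 4 →₀ ℕ :=
  Finsupp.single 0 (A n) + Finsupp.single 1 (B n) + Finsupp.single 2 (Cc n)

lemma d_apply0 (n : Fin 28) : d n 0 = A n := by simp [d, Finsupp.single_apply]
lemma d_apply1 (n : Fin 28) : d n 1 = B n := by simp [d, Finsupp.single_apply]
lemma d_apply2 (n : Fin 28) : d n 2 = Cc n := by simp [d, Finsupp.single_apply]
lemma d_apply3 (n : Fin 28) : d n 3 = 0 := by simp [d, Finsupp.single_apply]

lemma A_le (n : Fin 28) : A n ≤ 8 := by revert n; decide
lemma B_le (n : Fin 28) : B n ≤ 8 := by revert n; decide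
lemma Cc_le (n : Fin 28) : Cc n ≤ 3 := by revert n; decide
lemma ABC_sum (n : Fin 28) : A n + B n + 2 * Cc n = 10 := by revert n; decide

lemma d_inj : Function.Injective d := by
  intro m n h
  have h0 : A m = A n := by rw [← d_apply0, ← d_apply0, h]
  have h2 : Cc m = Cc n := by rw [← d_apply2, ← d_apply2, h]
  clear h; revert h0 h2; revert m n; decide

lemma pd0 : pderiv 0 f₀ = monomial (Finsupp.single 0 9) 10 := by
  simp [f₀, X_pow_eq_monomial, ← Finsupp.single_tsub]
lemma pd1 : pderiv 1 f₀ = monomial (Finsupp.single 1 9) 10 := by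
  simp [f₀, X_pow_eq_monomial, ← Finsupp.single_tsub]
lemma pd2 : pderiv 2 f₀ = monomial (Finsupp.single 2 4) 5 := by
  simp [f₀, X_pow_eq_monomial, ← Finsupp.single_tsub]
lemma pd3 : pderiv 3 f₀ = monomial (Finsupp.single 3 1) 2 := by
  simp [f₀, X_pow_eq_monomial, ← Finsupp.single_tsub]

lemma coeff_eq_zero_of_mem_J {p : S} (hp : p ∈ J) (m : Fin 28) : coeff (d m) p = 0 := by
  rw [J, pd0, pd1, pd2, pd3] at hp
  rw [Ideal.mem_span_insert] at hp
  obtain ⟨a, z, hz, rfl⟩ := hp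
  rw [Ideal.mem_span_insert] at hz
  obtain ⟨b, z2, hz2, rfl⟩ := hz
  rw [Ideal.mem_span_insert] at hz2
  obtain ⟨c, z3, hz3, rfl⟩ := hz2
  rw [Ideal.mem_span_singleton'] at hz3
  obtain ⟨e, rfl⟩ := hz3
  have h0 : ¬ Finsupp.single 0 9 ≤ d m := by
    rw [Finsupp.le_def]; intro h
    have := h 0; rw [d_apply0] at this; simp at this; have := A_le m; omega
  have h1 : ¬ Finsupp.single 1 9 ≤ d m := by
    rw [Finsupp.le_def]; intro h
    have := h 1; rw [d_apply1] at this; simp at this; have := B_le m; omega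
  have h2 : ¬ Finsupp.single 2 4 ≤ d m := by
    rw [Finsupp.le_def]; intro h
    have := h 2; rw [d_apply2] at this; simp at this; have := Cc_le m; omega
  have h3 : ¬ Finsupp.single 3 1 ≤ d m := by
    rw [Finsupp.le_def]; intro h
    have := h 3; rw [d_apply3] at this; simp at this
  simp [coeff_add, coeff_mul_monomial', h0, h1, h2, h3]

/-- The 28 monomials of weighted degree 10:
`x₁ⁱx₂^{4-i}x₃³` for `0 ≤ i ≤ 4`, `x₁ⁱx₂^{6-i}x₃²` for `0 ≤ i ≤ 6`,
`x₁ⁱx₂^{8-i}x₃` for `0 ≤ i ≤ 8`, and `x₁ⁱx₂^{10-i}` for `2 ≤ i ≤ 8`. -/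
def fam10 : Fin 28 → S := fun n =>
  if (n : ℕ) < 5 then X 0 ^ (n : ℕ) * X 1 ^ (4 - (n : ℕ)) * X 2 ^ 3
  else if (n : ℕ) < 12 then X 0 ^ ((n : ℕ) - 5) * X 1 ^ (6 - ((n : ℕ) - 5)) * X 2 ^ 2
  else if (n : ℕ) < 21 then X 0 ^ ((n : ℕ) - 12) * X 1 ^ (8 - ((n : ℕ) - 12)) * X 2
  else X 0 ^ ((n : ℕ) - 19) * X 1 ^ (10 - ((n : ℕ) - 19))

lemma fam_eq (n : Fin 28) : fam10 n = monomial (d n) 1 := by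
  simp only [fam10, A, B, Cc, d]
  split_ifs
  all_goals
    simp only [X_pow_eq_monomial, X, monomial_pow, monomial_mul, one_pow, mul_one,
        smul_eq_mul, Finsupp.smul_single, smul_eq_mul, mul_one]
  all_goals
    try (congr 2 ; ext i ; fin_cases i <;> simp [Finsupp.single_apply])

lemma weight_single (i : Fin 4) (k : ℕ) :
    Finsupp.weight w (Finsupp.single i k) = k * w i := by
  rw [Finsupp.weight_apply, Finsupp.sum_single_index (by simp), smul_eq_mul]

lemma weight_d (n : Fin 28) : Finsupp.weight w (d n) = 10 := by
  have := ABC_sum n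
  simp only [d, map_add, weight_single]
  simp [w, Fin.isValue]
  omega

lemma weight_eq (u : Fin 4 →₀ ℕ) :
    Finsupp.weight w u = u 0 + u 1 + 2 * u 2 + 5 * u 3 := by
  rw [Finsupp.weight_apply, Finsupp.sum_fintype]
  · simp only [Fin.sum_univ_four, w, smul_eq_mul, Matrix.cons_val_zero, Matrix.cons_val_one,
      Matrix.head_cons, Matrix.cons_val_two, Matrix.tail_cons, Matrix.cons_val_three]
    ring
  · intro i; simp

lemma mono_mem0 : monomial (Finsupp.single 0 9) (1:ℂ) ∈ J := by
  have h : pderiv 0 f₀ ∈ J := Ideal.subset_span (by simp)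
  rw [pd0] at h
  have h2 := Ideal.mul_mem_left J (C (10⁻¹)) h
  rw [C_mul_monomial] at h2
  norm_num at h2
  exact h2

lemma mono_mem1 : monomial (Finsupp.single 1 9) (1:ℂ) ∈ J := by
  have h : pderiv 1 f₀ ∈ J := Ideal.subset_span (by simp)
  rw [pd1] at h
  have h2 := Ideal.mul_mem_left J (C (10⁻¹)) h
  rw [C_mul_monomial] at h2
  norm_num at h2
  exact h2

lemma mono_mem2 : monomial (Finsupp.single 2 4) (1:ℂ) ∈ J := by
  have h : pderiv 2 f₀ ∈ J := Ideal.subset_span (by simp)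
  rw [pd2] at h
  have h2 := Ideal.mul_mem_left J (C (5⁻¹)) h
  rw [C_mul_monomial] at h2
  norm_num at h2
  exact h2

lemma mono_mem3 : monomial (Finsupp.single 3 1) (1:ℂ) ∈ J := by
  have h : pderiv 3 f₀ ∈ J := Ideal.subset_span (by simp)
  rw [pd3] at h
  have h2 := Ideal.mul_mem_left J (C (2⁻¹)) h
  rw [C_mul_monomial] at h2
  norm_num at h2
  exact h2

lemma mono_mem_J {u : Fin 4 →₀ ℕ} {i : Fin 4} {k : ℕ} (hk : Finsupp.single i k ≤ u)
    (hJ : monomial (Finsupp.single i k) (1:ℂ) ∈ J) : monomial u (1:ℂ) ∈ J := by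
  have e : monomial u (1:ℂ)
      = monomial (u - Finsupp.single i k) 1 * monomial (Finsupp.single i k) 1 := by
    rw [monomial_mul, tsub_add_cancel_of_le hk, one_mul]
  rw [e]; exact Ideal.mul_mem_left _ _ hJ

lemma exists_n (a b c : ℕ) (ha : a ≤ 8) (hb : b ≤ 8) (hc : c ≤ 3) (h : a + b + 2*c = 10) :
    ∃ n : Fin 28, A n = a ∧ B n = b ∧ Cc n = c := by
  have hb' : b = 10 - a - 2*c := by omega
  subst hb'
  interval_cases c <;> interval_cases a <;> first | omega | decide

lemma u_decomp (u : Fin 4 →₀ ℕ) :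
    u = Finsupp.single 0 (u 0) + Finsupp.single 1 (u 1)
      + Finsupp.single 2 (u 2) + Finsupp.single 3 (u 3) := by
  ext i; fin_cases i <;> simp [Finsupp.single_apply]


/-- The images under `mk` of the 28 monomials of `fam10` form a `ℂ`-basis of `R₁₀`. -/
theorem basis_R10 :
    LinearIndependent ℂ (fun n : Fin 28 => (Ideal.Quotient.mk J (fam10 n) : R)) ∧
      Submodule.span ℂ
        (Set.range fun n : Fin 28 => (Ideal.Quotient.mk J (fam10 n) : R)) = Rk 10 := by
  constructor
  · rw [Fintype.linearIndependent_iff]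
    intro g hg i
    have h0 : Ideal.Quotient.mk J (∑ j, g j • fam10 j) = 0 := by
      rw [← hg, ← Ideal.Quotient.mkₐ_eq_mk ℂ J, map_sum]
      simp only [map_smul, Ideal.Quotient.mkₐ_eq_mk]
    have hmem := (Ideal.Quotient.eq_zero_iff_mem).mp h0
    have hc := coeff_eq_zero_of_mem_J hmem i
    simp only [coeff_sum, coeff_smul, fam_eq, coeff_monomial, d_inj.eq_iff] at hc
    simpa [smul_eq_mul, mul_ite, Finset.sum_ite_eq'] using hc
  · apply le_antisymm
    · rw [Submodule.span_le]
      rintro _ ⟨n, rfl⟩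
      refine ⟨fam10 n, ?_, rfl⟩
      show IsWeightedHomogeneous w (fam10 n) 10
      rw [fam_eq]
      exact isWeightedHomogeneous_monomial _ _ _ (weight_d n)
    · rintro y ⟨p, hp, rfl⟩
      show (Ideal.Quotient.mk J p : R) ∈ _
      rw [← support_sum_monomial_coeff p, ← Ideal.Quotient.mkₐ_eq_mk ℂ J, map_sum]
      apply Submodule.sum_mem
      intro u hu
      have hp' : IsWeightedHomogeneous w p 10 := hp
      have hw : u 0 + u 1 + 2 * u 2 + 5 * u 3 = 10 := by
        have := hp' (mem_support_iff.mp hu)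
        rwa [weight_eq] at this
      have e1 : monomial u (coeff u p) = coeff u p • monomial u 1 := by
        rw [smul_monomial, smul_eq_mul, mul_one]
      rw [e1, map_smul]
      apply Submodule.smul_mem
      rw [Ideal.Quotient.mkₐ_eq_mk]
      by_cases h0 : 9 ≤ u 0
      · rw [Ideal.Quotient.eq_zero_iff_mem.mpr
          (mono_mem_J (Finsupp.single_le_iff.mpr h0) mono_mem0)]
        exact Submodule.zero_mem _
      by_cases h1 : 9 ≤ u 1
      · rw [Ideal.Quotient.eq_zero_iff_mem.mpr
          (mono_mem_J (Finsupp.single_le_iff.mpr h1) mono_mem1)]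
        exact Submodule.zero_mem _
      by_cases h2 : 4 ≤ u 2
      · rw [Ideal.Quotient.eq_zero_iff_mem.mpr
          (mono_mem_J (Finsupp.single_le_iff.mpr h2) mono_mem2)]
        exact Submodule.zero_mem _
      by_cases h3 : 1 ≤ u 3
      · rw [Ideal.Quotient.eq_zero_iff_mem.mpr
          (mono_mem_J (Finsupp.single_le_iff.mpr h3) mono_mem3)]
        exact Submodule.zero_mem _
      · obtain ⟨n, hA, hB, hC⟩ := exists_n (u 0) (u 1) (u 2)
          (by omega) (by omega) (by omega) (by omega)
        have hu3 : u 3 = 0 := by omega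
        have hdn : d n = u := by
          rw [d, hA, hB, hC, u_decomp u, hu3]
          simp
        have : monomial u (1:ℂ) = fam10 n := by rw [fam_eq, hdn]
        rw [this]
        exact Submodule.subset_span ⟨n, rfl⟩
end
end

section
/- The top graded pieces of the Jacobian ring of f₀ have the expected dimensions: the ℂ-vector space R₂₁ = mk(S₂₁) has finrank 2, and the ℂ-vector space R₂₂ = mk(S₂₂) has finrank 1 (these compute h^{0,2} = 2 and the one-dimensional socle R₂₂ ≅ ℂ). -/
open MvPolynomial

noncomputable section

namespace Aux

lemma weight_eq (d : Fin 4 →₀ ℕ) :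
    Finsupp.weight w d = d 0 * 1 + d 1 * 1 + d 2 * 2 + d 3 * 5 := by
  simp [w, Finsupp.weight, Finsupp.linearCombination, Finsupp.sum_fintype,
    Fin.sum_univ_four]

lemma Xpow_mem : ∀ i : Fin 4, (X i : S) ^ (![9,9,4,1] i) ∈ J := by
  have h0 : pderiv (σ := Fin 4) 0 f₀ = C 10 * X 0 ^ 9 := by
    simp [f₀]; rw [show ((10 : S) = C (10:ℂ)) from (map_ofNat C 10).symm]
  have h1 : pderiv (σ := Fin 4) 1 f₀ = C 10 * X 1 ^ 9 := by
    simp [f₀]; rw [show ((10 : S) = C (10:ℂ)) from (map_ofNat C 10).symm]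
  have h2 : pderiv (σ := Fin 4) 2 f₀ = C 5 * X 2 ^ 4 := by
    simp [f₀]; rw [show ((5 : S) = C (5:ℂ)) from (map_ofNat C 5).symm]
  have h3 : pderiv (σ := Fin 4) 3 f₀ = C 2 * X 3 ^ 1 := by
    simp [f₀]; rw [show ((2 : S) = C (2:ℂ)) from (map_ofNat C 2).symm]
  have key : ∀ (i : Fin 4) (c : ℂ) (n : ℕ), c ≠ 0 →
      pderiv i f₀ = C c * X i ^ n → (X i : S) ^ n ∈ J := by
    intro i c n hc h
    have hm : (X i : S) ^ n = C c⁻¹ * pderiv i f₀ := by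
      rw [h, ← mul_assoc, ← C_mul, inv_mul_cancel₀ hc, C_1, one_mul]
    rw [hm]
    refine Ideal.mul_mem_left _ _ (Ideal.subset_span ?_)
    fin_cases i <;> simp
  intro i
  fin_cases i
  · exact key 0 10 9 (by norm_num) h0
  · exact key 1 10 9 (by norm_num) h1
  · exact key 2 5 4 (by norm_num) h2
  · exact key 3 2 1 (by norm_num) h3

lemma monomial_mem_J {d : Fin 4 →₀ ℕ} {i : Fin 4} (h : ![9,9,4,1] i ≤ d i) :
    (monomial d 1 : S) ∈ J := by
  set n := ![9,9,4,1] i with hn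
  have hd : (monomial d 1 : S)
      = monomial (d - Finsupp.single i n) 1 * X i ^ n := by
    rw [X_pow_eq_monomial, monomial_mul, mul_one]
    have hfe : d - Finsupp.single i n + Finsupp.single i n = d := by
      refine Finsupp.ext fun j => ?_
      by_cases hji : j = i
      · subst hji
        simp only [Finsupp.add_apply, Finsupp.tsub_apply, Finsupp.single_eq_same]
        omega
      · simp [Finsupp.single_apply, Ne.symm hji, hji]
    rw [hfe]
  rw [hd]
  exact Ideal.mul_mem_left _ _ (Xpow_mem i)

/-- Coefficients of elements of `J` vanish on exponents below `(9,9,4,1)`. -/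
lemma coeff_eq_zero_of_mem_J {p : S} (hp : p ∈ J) :
    ∀ d : Fin 4 →₀ ℕ, d 0 ≤ 8 → d 1 ≤ 8 → d 2 ≤ 3 → d 3 = 0 → coeff d p = 0 := by
  have hgen : ∀ i : Fin 4, ∃ (c : ℂ) (e : Fin 4 →₀ ℕ),
      pderiv i f₀ = monomial e c ∧ (9 ≤ e 0 ∨ 9 ≤ e 1 ∨ 4 ≤ e 2 ∨ 1 ≤ e 3) := by
    intro i
    fin_cases i
    · exact ⟨10, Finsupp.single 0 9, by
        rw [← C_mul_X_pow_eq_monomial]; simp [f₀]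
        rw [show ((10 : S) = C (10:ℂ)) from (map_ofNat C 10).symm], by simp⟩
    · exact ⟨10, Finsupp.single 1 9, by
        rw [← C_mul_X_pow_eq_monomial]; simp [f₀]
        rw [show ((10 : S) = C (10:ℂ)) from (map_ofNat C 10).symm], by simp⟩
    · exact ⟨5, Finsupp.single 2 4, by
        rw [← C_mul_X_pow_eq_monomial]; simp [f₀]
        rw [show ((5 : S) = C (5:ℂ)) from (map_ofNat C 5).symm], by simp⟩
    · exact ⟨2, Finsupp.single 3 1, by
        rw [← C_mul_X_pow_eq_monomial]; simp [f₀]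
        rw [show ((2 : S) = C (2:ℂ)) from (map_ofNat C 2).symm], by simp⟩
  refine Submodule.span_induction ?_ ?_ ?_ ?_ hp
  · rintro x hx d h0 h1 h2 h3
    have : ∃ i : Fin 4, x = pderiv i f₀ := by
      rcases hx with h | h | h | h
      exacts [⟨0, h⟩, ⟨1, h⟩, ⟨2, h⟩, ⟨3, by simpa using h⟩]
    obtain ⟨i, rfl⟩ := this
    obtain ⟨c, e, heq, hbig⟩ := hgen i
    rw [heq, coeff_monomial, if_neg]
    rintro rfl
    omega
  · intro d _ _ _ _; simp
  · intro x y _ _ hx hy d h0 h1 h2 h3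
    rw [coeff_add, hx d h0 h1 h2 h3, hy d h0 h1 h2 h3, add_zero]
  · intro a x _ hx d h0 h1 h2 h3
    rw [smul_eq_mul, coeff_mul]
    refine Finset.sum_eq_zero ?_
    rintro ⟨u, v⟩ huv
    rw [Finset.HasAntidiagonal.mem_antidiagonal] at huv
    have hv : ∀ j, u j + v j = d j := by
      intro j; rw [← Finsupp.add_apply, huv]
    have h0' := hv 0; have h1' := hv 1; have h2' := hv 2; have h3' := hv 3
    rw [hx v (by omega) (by omega) (by omega) (by omega), mul_zero]

def e₁ : Fin 4 →₀ ℕ := Finsupp.single 0 7 + Finsupp.single 1 8 + Finsupp.single 2 3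
def e₂ : Fin 4 →₀ ℕ := Finsupp.single 0 8 + Finsupp.single 1 7 + Finsupp.single 2 3
def e₃ : Fin 4 →₀ ℕ := Finsupp.single 0 8 + Finsupp.single 1 8 + Finsupp.single 2 3

lemma e₁_apply : e₁ 0 = 7 ∧ e₁ 1 = 8 ∧ e₁ 2 = 3 ∧ e₁ 3 = 0 := by
  refine ⟨?_, ?_, ?_, ?_⟩ <;> simp [e₁, Finsupp.single_apply]
lemma e₂_apply : e₂ 0 = 8 ∧ e₂ 1 = 7 ∧ e₂ 2 = 3 ∧ e₂ 3 = 0 := by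
  refine ⟨?_, ?_, ?_, ?_⟩ <;> simp [e₂, Finsupp.single_apply]
lemma e₃_apply : e₃ 0 = 8 ∧ e₃ 1 = 8 ∧ e₃ 2 = 3 ∧ e₃ 3 = 0 := by
  refine ⟨?_, ?_, ?_, ?_⟩ <;> simp [e₃, Finsupp.single_apply]

def v₁ : R := mkL (monomial e₁ 1)
def v₂ : R := mkL (monomial e₂ 1)
def v₃ : R := mkL (monomial e₃ 1)

lemma mkL_eq_zero {p : S} (hp : p ∈ J) : mkL p = 0 := by
  show Ideal.Quotient.mk J p = 0
  exact (Ideal.Quotient.eq_zero_iff_mem).2 hp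

lemma eq_finsupp (d : Fin 4 →₀ ℕ) (e : Fin 4 →₀ ℕ)
    (h0 : d 0 = e 0) (h1 : d 1 = e 1) (h2 : d 2 = e 2) (h3 : d 3 = e 3) : d = e := by
  ext j
  fin_cases j <;> assumption

lemma mono_mem_span21 (d : Fin 4 →₀ ℕ) (hw : Finsupp.weight w d = 21) :
    mkL (monomial d 1) ∈ Submodule.span ℂ {v₁, v₂} := by
  rw [weight_eq] at hw
  by_cases h0 : 9 ≤ d 0
  · rw [mkL_eq_zero (monomial_mem_J (i := 0) (by simpa using h0))]; exact Submodule.zero_mem _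
  by_cases h1 : 9 ≤ d 1
  · rw [mkL_eq_zero (monomial_mem_J (i := 1) (by simpa using h1))]; exact Submodule.zero_mem _
  by_cases h2 : 4 ≤ d 2
  · rw [mkL_eq_zero (monomial_mem_J (i := 2) (by simpa using h2))]; exact Submodule.zero_mem _
  by_cases h3 : 1 ≤ d 3
  · rw [mkL_eq_zero (monomial_mem_J (i := 3) (by simpa using h3))]; exact Submodule.zero_mem _
  have hcase : (d 0 = 7 ∧ d 1 = 8 ∧ d 2 = 3 ∧ d 3 = 0)
      ∨ (d 0 = 8 ∧ d 1 = 7 ∧ d 2 = 3 ∧ d 3 = 0) := by omega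
  obtain ⟨hE0, hE1, hE2, hE3⟩ := e₁_apply
  obtain ⟨hF0, hF1, hF2, hF3⟩ := e₂_apply
  rcases hcase with ⟨a0, a1, a2, a3⟩ | ⟨a0, a1, a2, a3⟩
  · have : d = e₁ := eq_finsupp d e₁ (by omega) (by omega) (by omega) (by omega)
    subst this
    exact Submodule.subset_span (Set.mem_insert _ _)
  · have : d = e₂ := eq_finsupp d e₂ (by omega) (by omega) (by omega) (by omega)
    subst this
    exact Submodule.subset_span (Set.mem_insert_of_mem _ rfl)

lemma mono_mem_span22 (d : Fin 4 →₀ ℕ) (hw : Finsupp.weight w d = 22) :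
    mkL (monomial d 1) ∈ Submodule.span ℂ {v₃} := by
  rw [weight_eq] at hw
  by_cases h0 : 9 ≤ d 0
  · rw [mkL_eq_zero (monomial_mem_J (i := 0) (by simpa using h0))]; exact Submodule.zero_mem _
  by_cases h1 : 9 ≤ d 1
  · rw [mkL_eq_zero (monomial_mem_J (i := 1) (by simpa using h1))]; exact Submodule.zero_mem _
  by_cases h2 : 4 ≤ d 2
  · rw [mkL_eq_zero (monomial_mem_J (i := 2) (by simpa using h2))]; exact Submodule.zero_mem _
  by_cases h3 : 1 ≤ d 3
  · rw [mkL_eq_zero (monomial_mem_J (i := 3) (by simpa using h3))]; exact Submodule.zero_mem _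
  obtain ⟨hG0, hG1, hG2, hG3⟩ := e₃_apply
  have : d = e₃ := eq_finsupp d e₃ (by omega) (by omega) (by omega) (by omega)
  subst this
  exact Submodule.subset_span rfl

lemma mkL_mem_span {k : ℕ} {T : Set R}
    (hmono : ∀ d : Fin 4 →₀ ℕ, Finsupp.weight w d = k →
      mkL (monomial d 1) ∈ Submodule.span ℂ T)
    {p : S} (hp : p ∈ Sk k) : mkL p ∈ Submodule.span ℂ T := by
  simp only [Sk, mem_weightedHomogeneousSubmodule] at hp
  have hsum : mkL p = ∑ d ∈ p.support, mkL (monomial d (coeff d p)) := by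
    conv_lhs => rw [p.as_sum]
    rw [map_sum]
  rw [hsum]
  refine Submodule.sum_mem _ ?_
  intro d hd
  have hco : coeff d p ≠ 0 := mem_support_iff.1 hd
  have hwd : Finsupp.weight w d = k := hp hco
  have : (monomial d (coeff d p) : S) = coeff d p • monomial d 1 := by
    rw [smul_monomial, smul_eq_mul, mul_one]
  rw [this, map_smul]
  exact Submodule.smul_mem _ _ (hmono d hwd)

lemma weight_e₁ : Finsupp.weight w e₁ = 21 := by
  obtain ⟨h0, h1, h2, h3⟩ := e₁_apply
  rw [weight_eq, h0, h1, h2, h3]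
lemma weight_e₂ : Finsupp.weight w e₂ = 21 := by
  obtain ⟨h0, h1, h2, h3⟩ := e₂_apply
  rw [weight_eq, h0, h1, h2, h3]
lemma weight_e₃ : Finsupp.weight w e₃ = 22 := by
  obtain ⟨h0, h1, h2, h3⟩ := e₃_apply
  rw [weight_eq, h0, h1, h2, h3]

lemma Rk21_eq : Rk 21 = Submodule.span ℂ {v₁, v₂} := by
  apply le_antisymm
  · rintro x ⟨p, hp, rfl⟩
    exact mkL_mem_span mono_mem_span21 hp
  · rw [Submodule.span_le]
    rintro x (rfl | rfl)
    · exact ⟨monomial e₁ 1, (mem_weightedHomogeneousSubmodule _ _ _ _).2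
        (isWeightedHomogeneous_monomial _ _ _ weight_e₁), rfl⟩
    · exact ⟨monomial e₂ 1, (mem_weightedHomogeneousSubmodule _ _ _ _).2
        (isWeightedHomogeneous_monomial _ _ _ weight_e₂), rfl⟩

lemma Rk22_eq : Rk 22 = Submodule.span ℂ {v₃} := by
  apply le_antisymm
  · rintro x ⟨p, hp, rfl⟩
    exact mkL_mem_span mono_mem_span22 hp
  · rw [Submodule.span_le]
    rintro x rfl
    exact ⟨monomial e₃ 1, (mem_weightedHomogeneousSubmodule _ _ _ _).2
      (isWeightedHomogeneous_monomial _ _ _ weight_e₃), rfl⟩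

lemma indep : LinearIndependent ℂ ![v₁, v₂] := by
  rw [LinearIndependent.pair_iff]
  intro s t hst
  obtain ⟨hE0, hE1, hE2, hE3⟩ := e₁_apply
  obtain ⟨hF0, hF1, hF2, hF3⟩ := e₂_apply
  have hne' : e₁ ≠ e₂ := fun h => by rw [h] at hE0; omega
  have hne : e₂ ≠ e₁ := fun h => hne' h.symm
  have hmem : (s • monomial e₁ 1 + t • monomial e₂ 1 : S) ∈ J := by
    rw [← Ideal.Quotient.eq_zero_iff_mem]
    have : Ideal.Quotient.mk J (s • monomial e₁ 1 + t • monomial e₂ 1 : S)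
        = mkL (s • monomial e₁ 1 + t • monomial e₂ 1 : S) := rfl
    rw [this, map_add, map_smul, map_smul]
    exact hst
  have hcoef := coeff_eq_zero_of_mem_J hmem
  have hs : s = 0 := by
    have := hcoef e₁ (by omega) (by omega) (by omega) (by omega)
    rwa [coeff_add, coeff_smul, coeff_smul, coeff_monomial, coeff_monomial,
      if_pos rfl, if_neg hne, smul_eq_mul, smul_eq_mul, mul_one, mul_zero,
      add_zero] at this
  have ht : t = 0 := by
    have := hcoef e₂ (by omega) (by omega) (by omega) (by omega)
    rwa [coeff_add, coeff_smul, coeff_smul, coeff_monomial, coeff_monomial,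
      if_neg hne', if_pos rfl, smul_eq_mul, smul_eq_mul, mul_one, mul_zero,
      zero_add] at this
  exact ⟨hs, ht⟩

lemma v₃_ne_zero : v₃ ≠ 0 := by
  obtain ⟨hG0, hG1, hG2, hG3⟩ := e₃_apply
  intro h
  have hmem : (monomial e₃ 1 : S) ∈ J := by
    rw [← Ideal.Quotient.eq_zero_iff_mem]
    exact h
  have := coeff_eq_zero_of_mem_J hmem e₃ (by omega) (by omega) (by omega) (by omega)
  rw [coeff_monomial, if_pos rfl] at this
  exact one_ne_zero this

end Aux

open Aux in
/-- The top graded pieces of the Jacobian ring of `f₀`: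
`R₂₁` has dimension 2 (computing `h^{0,2} = 2`) and `R₂₂`, the socle, has dimension 1. -/
theorem finrank_R21_R22 :
    Module.finrank ℂ (Rk 21) = 2 ∧ Module.finrank ℂ (Rk 22) = 1 := by
  constructor
  · have hr : Set.range ![v₁, v₂] = {v₁, v₂} := by
      ext x; simp [Fin.exists_fin_two]; tauto
    rw [Rk21_eq, ← hr, finrank_span_eq_card indep]
    simp
  · rw [Rk22_eq, finrank_span_singleton v₃_ne_zero]
end
end

section
/- Poincaré duality for the Jacobian ring of f₀: for every i with 0 ≤ i ≤ 22 and every weighted homogeneous polynomial p of weighted degree i with p ∉ J, there exists a weighted homogeneous polynomial q of weighted degree 22 − i such that p·q ∉ J; that is, the multiplication pairing R_i ⊗ R_{22−i} → R₂₂ is nondegenerate. -/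
open MvPolynomial

noncomputable section

/-- The exponent set of the monomial generators of `J`. -/
def T : Set (Fin 4 →₀ ℕ) :=
  {Finsupp.single 0 9, Finsupp.single 1 9, Finsupp.single 2 4, Finsupp.single 3 1}

lemma J_eq_monomial_span :
    J = Ideal.span ((fun s => monomial s (1 : ℂ)) '' T) := by
  have h0 : pderiv (0 : Fin 4) f₀ = monomial (Finsupp.single 0 9) 10 := by
    simp only [f₀]; simp [X_pow_eq_monomial]
    ext j; simp [Finsupp.single_apply]; split_ifs <;> rfl
  have h1 : pderiv (1 : Fin 4) f₀ = monomial (Finsupp.single 1 9) 10 := by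
    simp only [f₀]; simp [X_pow_eq_monomial]
    ext j; simp [Finsupp.single_apply]; split_ifs <;> rfl
  have h2 : pderiv (2 : Fin 4) f₀ = monomial (Finsupp.single 2 4) 5 := by
    simp only [f₀]; simp [X_pow_eq_monomial]
    ext j; simp [Finsupp.single_apply]; split_ifs <;> rfl
  have h3 : pderiv (3 : Fin 4) f₀ = monomial (Finsupp.single 3 1) 2 := by
    simp only [f₀]; simp [X_pow_eq_monomial]
    ext j; simp [Finsupp.single_apply]; split_ifs <;> rfl
  have key : ∀ (e : Fin 4 →₀ ℕ) (c : ℂ), c ≠ 0 → e ∈ T →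
      (monomial e c ∈ Ideal.span ((fun s => monomial s (1 : ℂ)) '' T) ∧
        monomial e (1 : ℂ) ∈ J) → True := fun _ _ _ _ _ => trivial
  apply le_antisymm
  · rw [J, Ideal.span_le]
    rintro x hx
    have hmem : ∀ e ∈ T, (monomial e (1 : ℂ)) ∈
        Ideal.span ((fun s => monomial s (1 : ℂ)) '' T) := fun e he =>
      Ideal.subset_span ⟨e, he, rfl⟩
    have mul10 : ∀ (e : Fin 4 →₀ ℕ) (c : ℂ), e ∈ T →
        monomial e c ∈ Ideal.span ((fun s => monomial s (1 : ℂ)) '' T) := by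
      intro e c he
      have : monomial e c = C c * monomial e (1 : ℂ) := by
        rw [C_mul_monomial, mul_one]
      rw [this]
      exact Ideal.mul_mem_left _ _ (hmem e he)
    simp only [Set.mem_insert_iff, Set.mem_singleton_iff] at hx
    rcases hx with h | h | h | h <;> subst h
    · rw [h0]; exact mul10 _ _ (by left; rfl)
    · rw [h1]; exact mul10 _ _ (by right; left; rfl)
    · rw [h2]; exact mul10 _ _ (by right; right; left; rfl)
    · rw [h3]; exact mul10 _ _ (by right; right; right; rfl)
  · rw [Ideal.span_le]
    rintro x ⟨e, he, rfl⟩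
    have mulc : ∀ (g : S) (c : ℂ), g ∈ J → C c * g ∈ J := fun g c hg =>
      Ideal.mul_mem_left _ _ hg
    have gen : ∀ (e' : Fin 4 →₀ ℕ) (c : ℂ), c ≠ 0 → monomial e' c ∈ J →
        monomial e' (1 : ℂ) ∈ J := by
      intro e' c hc hmem
      have : monomial e' (1 : ℂ) = C c⁻¹ * monomial e' c := by
        rw [C_mul_monomial, inv_mul_cancel₀ hc]
      rw [this]
      exact Ideal.mul_mem_left _ _ hmem
    rcases he with h | h | h | h
    · subst h
      exact gen _ 10 (by norm_num) (h0 ▸ Ideal.subset_span (by left; rfl))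
    · subst h
      exact gen _ 10 (by norm_num) (h1 ▸ Ideal.subset_span (by right; left; rfl))
    · subst h
      exact gen _ 5 (by norm_num) (h2 ▸ Ideal.subset_span (by right; right; left; rfl))
    · rw [Set.mem_singleton_iff] at h; subst h
      exact gen _ 2 (by norm_num) (h3 ▸ Ideal.subset_span (by right; right; right; rfl))

lemma mem_J_iff {p : S} : p ∈ J ↔ ∀ m ∈ p.support, ∃ s ∈ T, s ≤ m := by
  rw [J_eq_monomial_span, mem_ideal_span_monomial_image]

lemma weight_eval (m : Fin 4 →₀ ℕ) :
    Finsupp.weight w m = m 0 + m 1 + 2 * m 2 + 5 * m 3 := by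
  rw [Finsupp.weight_apply, Finsupp.sum_fintype _ _ (fun i => by simp)]
  simp [Fin.sum_univ_four, w]
  ring

/-- The socle exponent. -/
def soc : Fin 4 →₀ ℕ :=
  Finsupp.single 0 8 + Finsupp.single 1 8 + Finsupp.single 2 3

lemma soc_apply : soc 0 = 8 ∧ soc 1 = 8 ∧ soc 2 = 3 ∧ soc 3 = 0 := by
  refine ⟨?_, ?_, ?_, ?_⟩ <;> simp [soc]

/-- Poincaré duality for the Jacobian ring of `f₀`: the multiplication pairing
`R_i ⊗ R_{22-i} → R₂₂` is nondegenerate. -/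
theorem poincare_duality :
    ∀ i : ℕ, i ≤ 22 → ∀ p : S, IsWeightedHomogeneous w p i → p ∉ J →
      ∃ q : S, IsWeightedHomogeneous w q (22 - i) ∧ p * q ∉ J := by
  intro i hi p hp hpJ
  -- find a monomial of p not dominated by any generator
  rw [mem_J_iff] at hpJ
  push_neg at hpJ
  obtain ⟨m, hm, hdom⟩ := hpJ
  have hb : ∀ s ∈ T, ¬ s ≤ m := hdom
  have h0 : m 0 ≤ 8 := by
    by_contra h
    exact hb _ (by left; rfl) ((Finsupp.single_le_iff).2 (by omega))
  have h1 : m 1 ≤ 8 := by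
    by_contra h
    exact hb _ (by right; left; rfl) ((Finsupp.single_le_iff).2 (by omega))
  have h2 : m 2 ≤ 3 := by
    by_contra h
    exact hb _ (by right; right; left; rfl) ((Finsupp.single_le_iff).2 (by omega))
  have h3 : m 3 = 0 := by
    by_contra h
    exact hb _ (by right; right; right; rfl) ((Finsupp.single_le_iff).2 (by omega))
  have hdeg : Finsupp.weight w m = i := hp (mem_support_iff.mp hm)
  rw [weight_eval] at hdeg
  obtain ⟨s0, s1, s2, s3⟩ := soc_apply
  have hms : m ≤ soc := by
    rw [Finsupp.le_def]
    intro j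
    fin_cases j <;> simp_all
  refine ⟨monomial (soc - m) 1, ?_, ?_⟩
  · apply isWeightedHomogeneous_monomial
    rw [weight_eval]
    have t0 : (soc - m) 0 = 8 - m 0 := by simp [Finsupp.tsub_apply, s0]
    have t1 : (soc - m) 1 = 8 - m 1 := by simp [Finsupp.tsub_apply, s1]
    have t2 : (soc - m) 2 = 3 - m 2 := by simp [Finsupp.tsub_apply, s2]
    have t3 : (soc - m) 3 = 0 := by simp [Finsupp.tsub_apply, s3, h3]
    rw [t0, t1, t2, t3]
    omega
  · rw [mem_J_iff]
    push_neg
    refine ⟨soc, ?_, ?_⟩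
    · rw [mem_support_iff]
      have : soc = m + (soc - m) := by rw [add_tsub_cancel_of_le hms]
      nth_rewrite 1 [this]
      rw [coeff_mul_monomial, mul_one]
      exact mem_support_iff.mp hm
    · intro s hs
      rcases hs with h | h | h | h
      · subst h; rw [Finsupp.single_le_iff, s0]; omega
      · subst h; rw [Finsupp.single_le_iff, s1]; omega
      · subst h; rw [Finsupp.single_le_iff, s2]; omega
      · rw [Set.mem_singleton_iff] at h; subst h
        rw [Finsupp.single_le_iff, s3]; omega
end
end

section
/- A tangent space with large fibers is fixed only by ±identity: let W be a ℂ-subspace of the space of linear maps ℂ² →ₗ[ℂ] ℂ²⁸ such that (i) for every nonzero v ∈ ℂ², the subspace {X v : X ∈ W} of ℂ²⁸ has finrank > 14, and (ii) the span of {X v : X ∈ W, v ∈ ℂ²} is all of ℂ²⁸. Suppose A ∈ U(2) is a unitary 2×2 complex matrix and B' is a real 28×28 matrix with B'ᵀB' = 1 and det B' = 1, with complexification B, and suppose B·(X v) = X·(A v) for all X ∈ W and v ∈ ℂ². Then either A = 1 and B' = 1, or A = −1 and B' = −1. -/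
open Matrix

lemma dot_pres {n : ℕ} {B : Matrix (Fin n) (Fin n) ℂ} (hB : Bᵀ * B = 1) (x y : Fin n → ℂ) :
    (B *ᵥ x) ⬝ᵥ (B *ᵥ y) = x ⬝ᵥ y := by
  rw [dotProduct_mulVec, ← mulVec_transpose, mulVec_mulVec, hB, one_mulVec]

lemma eig_orth {n : ℕ} {B : Matrix (Fin n) (Fin n) ℂ} (hB : Bᵀ * B = 1)
    {x y : Fin n → ℂ} {l m : ℂ} (hx : B *ᵥ x = l • x) (hy : B *ᵥ y = m • y)
    (hlm : l * m ≠ 1) : x ⬝ᵥ y = 0 := by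
  have h := dot_pres hB x y
  rw [hx, hy, smul_dotProduct, dotProduct_smul] at h
  simp only [smul_eq_mul] at h
  have : (l * m - 1) * (x ⬝ᵥ y) = 0 := by linear_combination h
  rcases mul_eq_zero.1 this with h' | h'
  · exact absurd (sub_eq_zero.1 h') hlm
  · exact h'

lemma aux_iso (S T : Submodule ℂ (Fin 28 → ℂ))
    (h : ∀ x ∈ S, ∀ y ∈ T, x ⬝ᵥ y = 0)
    (hS : 14 < Module.finrank ℂ S) (hT : 14 < Module.finrank ℂ T) : False := by
  classical
  set D : LinearMap.BilinForm ℂ (Fin 28 → ℂ) := Matrix.toBilin' 1 with hD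
  have happ : ∀ x y, D x y = x ⬝ᵥ y := by
    intro x y; rw [hD, Matrix.toBilin'_apply', one_mulVec]
  have hrefl : D.IsRefl := by
    intro x y hxy; rw [happ] at *; rwa [dotProduct_comm]
  have hnd : D.Nondegenerate := by
    refine ⟨fun x hx => ?_, fun x hx => ?_⟩
    all_goals (funext i; simpa [happ] using hx (Pi.single i 1))
  have hST : S ≤ D.orthogonal T := by
    intro x hx
    rw [LinearMap.BilinForm.mem_orthogonal_iff]
    intro y hy
    rw [happ, dotProduct_comm]
    exact h x hx y hy
  have h28 : Module.finrank ℂ (D.orthogonal T) = 28 - Module.finrank ℂ T := by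
    rw [LinearMap.BilinForm.finrank_orthogonal hnd T]
    congr 1
    simp
  have hle := Submodule.finrank_mono hST
  have hT28 : Module.finrank ℂ T ≤ 28 := by
    have := Submodule.finrank_le T
    simpa using this
  omega

/-- A tangent space with large fibers is fixed only by `±identity`: if `W` is a subspace of
`Hom(ℂ², ℂ²⁸)` whose fibers `{X v : X ∈ W}` have dimension `> 14` for every nonzero `v` and
whose total image spans `ℂ²⁸`, and if `A ∈ U(2)` and `B' ∈ SO(28)` satisfy
`B·(X v) = X·(A v)` for all `X ∈ W`, `v ∈ ℂ²`, then `(A, B') = ±(1, 1)`. -/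
theorem fixed_only_by_pm_identity
    (W : Submodule ℂ ((Fin 2 → ℂ) →ₗ[ℂ] (Fin 28 → ℂ)))
    (h1 : ∀ v : Fin 2 → ℂ, v ≠ 0 →
      14 < Module.finrank ℂ (Submodule.map (LinearMap.applyₗ v) W))
    (h2 : Submodule.span ℂ
      {y : Fin 28 → ℂ | ∃ X ∈ W, ∃ v : Fin 2 → ℂ, y = X v} = ⊤)
    (A : Matrix (Fin 2) (Fin 2) ℂ) (hA : Aᴴ * A = 1)
    (B' : Matrix (Fin 28) (Fin 28) ℝ) (hB1 : B'ᵀ * B' = 1) (hB2 : B'.det = 1)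
    (hcomm : ∀ X ∈ W, ∀ v : Fin 2 → ℂ,
      (B'.map Complex.ofReal).mulVec (X v) = X (A.mulVec v)) :
    (A = 1 ∧ B' = 1) ∨ (A = -1 ∧ B' = -1) := by
  classical
  set B := B'.map Complex.ofReal with hBdef
  have hBo : Bᵀ * B = 1 := by
    have h : B = B'.map (Complex.ofRealHom : ℝ →+* ℂ) := rfl
    rw [h, ← Matrix.transpose_map, ← Matrix.map_mul, hB1, Matrix.map_one]
    · exact map_zero _
    · exact map_one _
  set E : ℂ → Submodule ℂ (Fin 28 → ℂ) :=
    fun l => LinearMap.ker (B.mulVecLin - l • LinearMap.id) with hE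
  have hEmem : ∀ (l : ℂ) (x : Fin 28 → ℂ), x ∈ E l ↔ B *ᵥ x = l • x := by
    intro l x
    simp [hE, LinearMap.mem_ker, sub_eq_zero, LinearMap.sub_apply, mulVecLin_apply]
  have hfib : ∀ (v : Fin 2 → ℂ) (l : ℂ), A *ᵥ v = l • v → v ≠ 0 →
      14 < Module.finrank ℂ (E l) := by
    intro v l hv hv0
    have hle : Submodule.map (LinearMap.applyₗ v) W ≤ E l := by
      rintro y ⟨X, hX, rfl⟩
      rw [hEmem]
      have hc := hcomm X hX v
      rw [hv] at hc
      exact (by simpa [_root_.map_smul] using hc : B *ᵥ X v = l • X v)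
    exact lt_of_lt_of_le (h1 v hv0) (Submodule.finrank_mono hle)
  have key : ∀ (v : Fin 2 → ℂ) (l : ℂ), v ≠ 0 → A *ᵥ v = l • v → l = 1 ∨ l = -1 := by
    intro v l hv0 hv
    by_contra hcon
    push_neg at hcon
    have hll : l * l ≠ 1 := by
      intro h
      have h' : (l - 1) * (l + 1) = 0 := by linear_combination h
      rcases mul_eq_zero.1 h' with h'' | h''
      · exact hcon.1 (sub_eq_zero.1 h'')
      · exact hcon.2 (eq_neg_of_add_eq_zero_left h'')
    exact aux_iso (E l) (E l)
      (fun x hx y hy => eig_orth hBo ((hEmem l x).1 hx) ((hEmem l y).1 hy) hll)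
      (hfib v l hv hv0) (hfib v l hv hv0)
  obtain ⟨l, hl⟩ := Module.End.exists_eigenvalue (A.mulVecLin : Module.End ℂ (Fin 2 → ℂ))
  obtain ⟨v, hv⟩ := hl.exists_hasEigenvector
  have hv0 : v ≠ 0 := hv.right
  have hAv : A *ᵥ v = l • v := by
    simpa [mulVecLin_apply] using hv.apply_eq_smul
  have hl2 : l = 1 ∨ l = -1 := key v l hv0 hAv
  have hlr : l * l = 1 := by rcases hl2 with h | h <;> rw [h] <;> ring
  set w : Fin 2 → ℂ := ![-(starRingEnd ℂ) (v 1), (starRingEnd ℂ) (v 0)] with hw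
  have hw0 : w ≠ 0 := by
    intro h
    apply hv0
    have h0 := congrFun h 0
    have h1' := congrFun h 1
    simp [hw] at h0 h1'
    funext i; fin_cases i
    · exact h1'
    · exact h0
  have hvw : star v ⬝ᵥ w = 0 := by
    simp [hw, dotProduct, Fin.sum_univ_two]
    ring
  have hvv : star v ⬝ᵥ v ≠ 0 := by
    intro h
    apply hv0
    simp only [dotProduct, Fin.sum_univ_two, Pi.star_apply, RCLike.star_def,
      ← Complex.normSq_eq_conj_mul_self] at h
    have h' : Complex.normSq (v 0) + Complex.normSq (v 1) = 0 := by exact_mod_cast h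
    have h0 := (add_eq_zero_iff_of_nonneg (Complex.normSq_nonneg _)
      (Complex.normSq_nonneg _)).1 h'
    funext i
    fin_cases i
    · exact Complex.normSq_eq_zero.1 h0.1
    · exact Complex.normSq_eq_zero.1 h0.2
  have hAHv : Aᴴ *ᵥ v = l • v := by
    have h1' : Aᴴ *ᵥ (A *ᵥ v) = v := by rw [mulVec_mulVec, hA, one_mulVec]
    rw [hAv, mulVec_smul] at h1'
    have h2' := congrArg (fun z => l • z) h1'
    simp only [smul_smul, hlr, one_smul] at h2'
    exact h2'
  have hrow : star v ᵥ* A = l • star v := by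
    have hst : star (Aᴴ *ᵥ v) = star v ᵥ* A := by
      rw [star_mulVec, conjTranspose_conjTranspose]
    rw [← hst, hAHv, star_smul]
    congr 1
    rcases hl2 with h | h <;> simp [h]
  let φ : (Fin 2 → ℂ) →ₗ[ℂ] ℂ :=
    { toFun := fun u => star v ⬝ᵥ u
      map_add' := fun a b => by simp [dotProduct_add]
      map_smul' := fun c a => by simp [dotProduct_smul] }
  have hφv : φ v = star v ⬝ᵥ v := rfl
  have hφw : φ w = 0 := hvw
  have hφAw : φ (A *ᵥ w) = 0 := by
    show star v ⬝ᵥ (A *ᵥ w) = 0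
    rw [dotProduct_mulVec, hrow, smul_dotProduct, hvw, smul_zero]
  have hrange : LinearMap.range φ = ⊤ := by
    rw [eq_top_iff]
    rintro c -
    refine ⟨(c / (star v ⬝ᵥ v)) • v, ?_⟩
    rw [_root_.map_smul, hφv, smul_eq_mul, div_mul_cancel₀ _ hvv]
  have hker : Module.finrank ℂ (LinearMap.ker φ) = 1 := by
    have hrn := LinearMap.finrank_range_add_finrank_ker φ
    rw [hrange] at hrn
    simp only [finrank_top] at hrn
    have hd : Module.finrank ℂ (Fin 2 → ℂ) = 2 := by simp
    have hc : Module.finrank ℂ ℂ = 1 := Module.finrank_self ℂ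
    omega
  have hspanw : Submodule.span ℂ {w} = LinearMap.ker φ := by
    apply Submodule.eq_of_le_of_finrank_eq
    · rw [Submodule.span_le]
      intro x hx
      rcases hx with rfl
      exact hφw
    · rw [finrank_span_singleton hw0, hker]
  obtain ⟨m, hAw⟩ : ∃ m : ℂ, A *ᵥ w = m • w := by
    have hmem : A *ᵥ w ∈ Submodule.span ℂ {w} := by rw [hspanw]; exact hφAw
    obtain ⟨m, hm⟩ := Submodule.mem_span_singleton.1 hmem
    exact ⟨m, hm.symm⟩
  have hm2 : m = 1 ∨ m = -1 := key w m hw0 hAw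
  have hlm : l = m := by
    by_contra hne
    have hprod : l * m ≠ 1 := by
      rcases hl2 with h | h <;> rcases hm2 with h' | h' <;>
        simp [h, h'] at hne ⊢ <;> norm_num
    exact aux_iso (E l) (E m)
      (fun x hx y hy => eig_orth hBo ((hEmem l x).1 hx) ((hEmem m y).1 hy) hprod)
      (hfib v l hAv hv0) (hfib w m hAw hw0)
  rw [← hlm] at hAw
  have hindep : LinearIndependent ℂ ![v, w] := by
    rw [LinearIndependent.pair_iff]
    intro s t hst
    have hdot := congrArg (fun u => star v ⬝ᵥ u) hst
    simp only [dotProduct_add, dotProduct_smul, hvw, smul_eq_mul, mul_zero, add_zero,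
      dotProduct_zero] at hdot
    have hs : s = 0 := by
      rcases mul_eq_zero.1 hdot with h | h
      · exact h
      · exact absurd h hvv
    refine ⟨hs, ?_⟩
    rw [hs, zero_smul, zero_add] at hst
    exact (smul_eq_zero.1 hst).resolve_right hw0
  have hspan2 : ∀ u : Fin 2 → ℂ, A *ᵥ u = l • u := by
    have htop : Submodule.span ℂ (Set.range ![v, w]) = ⊤ :=
      hindep.span_eq_top_of_card_eq_finrank (by simp)
    have hker2 : Submodule.span ℂ (Set.range ![v, w]) ≤
        LinearMap.ker (A.mulVecLin - l • LinearMap.id) := by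
      rw [Submodule.span_le]
      rintro x ⟨i, rfl⟩
      fin_cases i <;>
        simp [LinearMap.mem_ker, mulVecLin_apply, sub_eq_zero, hAv, hAw]
    intro u
    have hu : u ∈ Submodule.span ℂ (Set.range ![v, w]) := by rw [htop]; trivial
    have := hker2 hu
    simpa only [LinearMap.mem_ker, LinearMap.sub_apply, LinearMap.smul_apply, LinearMap.id_apply,
      mulVecLin_apply, sub_eq_zero] using this
  have hAmat : A = l • (1 : Matrix (Fin 2) (Fin 2) ℂ) := by
    ext i j
    have hx := congrFun (hspan2 (Pi.single j 1)) i
    simp [mulVec_single, Matrix.one_apply, Pi.single_apply] at hx ⊢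
    simp [hx, mul_comm]
  have hBall : ∀ y : Fin 28 → ℂ, B *ᵥ y = l • y := by
    have hgen : {y : Fin 28 → ℂ | ∃ X ∈ W, ∃ u : Fin 2 → ℂ, y = X u} ⊆ (E l : Set _) := by
      rintro y ⟨X, hX, u, rfl⟩
      rw [SetLike.mem_coe, hEmem]
      have hc := hcomm X hX u
      rw [hAmat, smul_mulVec, one_mulVec] at hc
      simpa [_root_.map_smul] using hc
    intro y
    have hle : (⊤ : Submodule ℂ (Fin 28 → ℂ)) ≤ E l := h2 ▸ Submodule.span_le.2 hgen
    exact (hEmem l y).1 (hle trivial)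
  have hBmat : B = l • (1 : Matrix (Fin 28) (Fin 28) ℂ) := by
    ext i j
    have hx := congrFun (hBall (Pi.single j 1)) i
    simp [mulVec_single, Matrix.one_apply, Pi.single_apply] at hx ⊢
    simp [hx, mul_comm]
  rcases hl2 with h | h
  · left
    constructor
    · rw [hAmat, h, one_smul]
    · ext i j
      have hx := congrFun (congrFun hBmat i) j
      rw [h, one_smul] at hx
      have h' : (B' i j : ℂ) = ((if i = j then (1 : ℝ) else 0 : ℝ) : ℂ) := by
        simp only [hBdef, Matrix.map_apply, Matrix.one_apply] at hx
        rw [hx]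
        split <;> simp
      rw [Matrix.one_apply]
      exact_mod_cast h'
  · right
    constructor
    · rw [hAmat, h]
      simp
    · ext i j
      have hx := congrFun (congrFun hBmat i) j
      rw [h] at hx
      have h' : (B' i j : ℂ) = ((if i = j then (-1 : ℝ) else 0 : ℝ) : ℂ) := by
        simp only [hBdef, Matrix.map_apply, Matrix.smul_apply, Matrix.one_apply,
          smul_eq_mul] at hx
        rw [hx]
        split <;> simp
      have : B' i j = (if i = j then (-1 : ℝ) else 0) := by exact_mod_cast h'
      rw [this]
      simp [Matrix.one_apply]
      split <;> simp
end

section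
/- A subspace with fibers of dimension greater than 14 is not tangent to any geodesic SU(2,14)-variation: let W be a ℂ-subspace of the space of linear maps ℂ² →ₗ[ℂ] ℂ²⁸ such that for every nonzero v ∈ ℂ² the subspace {X v : X ∈ W} of ℂ²⁸ has finrank > 14. Then there is no real 28×28 matrix J with JᵀJ = 1 and J² = −1 whose complexification J_ℂ satisfies J_ℂ·(X v) = i·(X v) for all X ∈ W and v ∈ ℂ². -/
open Matrix

noncomputable def conjEquiv : (Fin 28 → ℂ) ≃ₗ[ℝ] (Fin 28 → ℂ) :=
  LinearEquiv.piCongrRight fun _ => Complex.conjAe.toLinearEquiv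

lemma conjEquiv_apply (w : Fin 28 → ℂ) (j : Fin 28) :
    conjEquiv w j = (starRingEnd ℂ) (w j) := rfl

lemma mulVec_conj (A : Matrix (Fin 28) (Fin 28) ℝ) (w : Fin 28 → ℂ) :
    (A.map Complex.ofReal).mulVec (conjEquiv w) =
      conjEquiv ((A.map Complex.ofReal).mulVec w) := by
  funext j
  simp [mulVec, dotProduct, conjEquiv_apply, map_sum, Complex.conj_ofReal]

/-- A subspace with fibers of dimension greater than 14 is not tangent to any geodesic
`SU(2,14)`-variation: there is no orthogonal complex structure `J` on `ℝ²⁸` whose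
complexification satisfies `J_ℂ·(X v) = i·(X v)` for all `X ∈ W` and `v ∈ ℂ²`. -/
theorem not_tangent_to_geodesic
    (W : Submodule ℂ ((Fin 2 → ℂ) →ₗ[ℂ] (Fin 28 → ℂ)))
    (h1 : ∀ v : Fin 2 → ℂ, v ≠ 0 →
      14 < Module.finrank ℂ (Submodule.map (LinearMap.applyₗ v) W)) :
    ¬ ∃ J : Matrix (Fin 28) (Fin 28) ℝ, Jᵀ * J = 1 ∧ J * J = -1 ∧
      ∀ X ∈ W, ∀ v : Fin 2 → ℂ,
        (J.map Complex.ofReal).mulVec (X v) = Complex.I • (X v) := by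
  rintro ⟨J, -, -, hJe⟩
  set v : Fin 2 → ℂ := Pi.single 0 1 with hv
  have hvne : v ≠ 0 := by
    intro h
    have := congrFun h 0
    simp [hv] at this
  set F := Submodule.map (LinearMap.applyₗ v) W with hF
  have hFd : 14 < Module.finrank ℂ F := h1 v hvne
  -- every element of F is an i-eigenvector
  have hFe : ∀ w ∈ F, (J.map Complex.ofReal).mulVec w = Complex.I • w := by
    rintro w ⟨X, hX, rfl⟩
    exact hJe X hX v
  set Fr := F.restrictScalars ℝ with hFr
  set F' := Fr.map (conjEquiv : (Fin 28 → ℂ) →ₗ[ℝ] (Fin 28 → ℂ)) with hF'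
  -- every element of F' is a (-i)-eigenvector
  have hF'e : ∀ w ∈ F', (J.map Complex.ofReal).mulVec w = -Complex.I • w := by
    rintro w ⟨u, hu, rfl⟩
    have := hFe u hu
    rw [LinearEquiv.coe_coe, mulVec_conj, this]
    funext j
    simp only [conjEquiv_apply, Pi.smul_apply, smul_eq_mul, RingHom.map_mul, Complex.conj_I,
      neg_smul, Pi.neg_apply, neg_mul]
  -- disjoint
  have hdisj : Fr ⊓ F' = ⊥ := by
    rw [Submodule.eq_bot_iff]
    rintro w ⟨hw1, hw2⟩
    have h1' := hFe w hw1
    have h2' := hF'e w hw2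
    rw [h1'] at h2'
    have : (2 * Complex.I) • w = 0 := by
      have := sub_eq_zero_of_eq h2'
      rw [← sub_smul] at this
      convert this using 2
      ring
    have h2I : (2 * Complex.I) ≠ 0 := by simp [Complex.I_ne_zero]
    exact (smul_eq_zero.mp this).resolve_left h2I
  have hsum := Submodule.finrank_sup_add_finrank_inf_eq Fr F'
  rw [hdisj] at hsum
  simp only [finrank_bot, add_zero] at hsum
  have hle : Module.finrank ℝ ↥(Fr ⊔ F') ≤ Module.finrank ℝ (Fin 28 → ℂ) :=
    Submodule.finrank_le _
  have htot : Module.finrank ℝ (Fin 28 → ℂ) = 56 := by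
    rw [Module.finrank_pi_fintype ℝ]; simp [Complex.finrank_real_complex]
  have heq : Module.finrank ℝ F' = Module.finrank ℝ Fr :=
    LinearEquiv.finrank_map_eq conjEquiv Fr
  have hr : Module.finrank ℝ Fr = 2 * Module.finrank ℂ F := by
    have := Module.finrank_mul_finrank ℝ ℂ ↥F
    rw [Complex.finrank_real_complex] at this
    exact this.symm
  omega
end
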